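/- For every finite simple graph G, the star b-chromatic number S_b(G) equals the largest integer k such that there exists a star k-coloring of G in which every color class V_i, i ∈ [k], contains a star b-vertex. -/

import Mathlib

/-!
Definitions for star colorings, star recoloring steps, the strict partial order `≺ₛ`,
star b-vertices, the star (b-)chromatic number, star degrees and related notions,
following Božović, Mesarič Štesl, Peterin,
"On star b-chromatic number of a graph".
-/

variable {V : Type*}

/-- A proper coloring which is a *star coloring*: no path on four vertices
(vertices `a-b-x-y` with the three edges `ab`, `bx`, `xy`) is bicolored,
i.e. the union of any two color classes induces a star forest. -/
def IsStarColoring (G : SimpleGraph V) (c : V → ℕ) : Prop :=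
  (∀ ⦃u w⦄, G.Adj u w → c u ≠ c w) ∧
  ∀ a b x y : V, G.Adj a b → G.Adj b x → G.Adj x y →
    a ≠ x → b ≠ y → a ≠ y → ¬(c a = c x ∧ c b = c y)

/-- The set of colors used by a coloring. -/
def colorsUsed [Fintype V] (c : V → ℕ) : Finset ℕ :=
  Finset.image c Finset.univ

/-- `c'` is obtained from `c` by a *star recoloring step*: some color class `Vᵢ`
of the star coloring `c` is completely recolored, each of its vertices receiving one
of the remaining colors of `c`, so that the result `c'` is again a star coloring
(using the colors of `c` minus `i`). We write `c' ⊲ₛ c`. -/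
def StarRecolorStep [Fintype V] (G : SimpleGraph V) (c' c : V → ℕ) : Prop :=
  IsStarColoring G c ∧ IsStarColoring G c' ∧
  ∃ i ∈ colorsUsed c,
    (∀ v, c v ≠ i → c' v = c v) ∧
    ∀ v, c v = i → c' v ≠ i ∧ c' v ∈ colorsUsed c

/-- A minimal element of the strict partial order `≺ₛ` (the transitive closure of
the star recoloring step relation `⊲ₛ`): a star coloring on which no star
recoloring step can be performed. -/
def IsStarBColoring [Fintype V] (G : SimpleGraph V) (c : V → ℕ) : Prop :=
  IsStarColoring G c ∧ ∀ c', ¬ StarRecolorStep G c' c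

/-- The *star b-chromatic number* `Sᵦ(G)`: the maximum number of colors used by a
minimal element of `≺ₛ`. -/
noncomputable def starBChromaticNumber [Fintype V] (G : SimpleGraph V) : ℕ :=
  sSup {n | ∃ c : V → ℕ, IsStarBColoring G c ∧ (colorsUsed c).card = n}

/-- The *star chromatic number* `S(G)`: the minimum number of colors in a star coloring. -/
noncomputable def starChromaticNumber [Fintype V] (G : SimpleGraph V) : ℕ :=
  sInf {n | ∃ c : V → ℕ, IsStarColoring G c ∧ (colorsUsed c).card = n}

/-- A color `j` is *blocked* for the vertex `v` under the star coloring `c`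
if `j` is the color of `v` itself, or recoloring `v` alone with `j` destroys
the star coloring property. -/
def ColorBlockedFor [DecidableEq V] (G : SimpleGraph V) (c : V → ℕ) (v : V) (j : ℕ) : Prop :=
  j = c v ∨ ¬ IsStarColoring G (Function.update c v j)

/-- A color of `c` which is not blocked for `v` is *available* for `v`. -/
def ColorAvailableFor [Fintype V] [DecidableEq V] (G : SimpleGraph V) (c : V → ℕ)
    (v : V) (j : ℕ) : Prop :=
  j ∈ colorsUsed c ∧ ¬ ColorBlockedFor G c v j

/-- `u-b-x-w` is an induced path on four vertices of `G`. -/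
def IsInducedP4 (G : SimpleGraph V) (u b x w : V) : Prop :=
  G.Adj u b ∧ G.Adj b x ∧ G.Adj x w ∧
  ¬ G.Adj u x ∧ ¬ G.Adj b w ∧ ¬ G.Adj u w ∧
  u ≠ x ∧ b ≠ w ∧ u ≠ w

/-- The relation `~ᵢ` on a color class: two vertices of the same color joined
by an induced path on four vertices. -/
def P4Rel (G : SimpleGraph V) (c : V → ℕ) (u w : V) : Prop :=
  c u = c w ∧ ∃ b x, IsInducedP4 G u b x w

/-- The `P₄`-system of `v`: its equivalence class under the
reflexive-transitive closure of `~ᵢ`. -/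
def P4System (G : SimpleGraph V) (c : V → ℕ) (v : V) : Set V :=
  {u | Relation.ReflTransGen (P4Rel G c) v u}

/-- An available color `j` for `v` is *blocked for the `P₄`-system of `v`* if every
recoloring of the color class of `v` (each vertex receiving an available color)
in which `v` is recolored by `j` yields a bicolored path on four vertices between
two vertices of the `P₄`-system of `v`. -/
def BlockedForP4System [Fintype V] [DecidableEq V] (G : SimpleGraph V) (c : V → ℕ)
    (v : V) (j : ℕ) : Prop :=
  ∀ c' : V → ℕ,
    (∀ u, c u ≠ c v → c' u = c u) →
    (∀ u, c u = c v → ColorAvailableFor G c u (c' u)) →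
    c' v = j →
    ∃ u w b x, u ∈ P4System G c v ∧ w ∈ P4System G c v ∧
      G.Adj u b ∧ G.Adj b x ∧ G.Adj x w ∧ u ≠ x ∧ b ≠ w ∧ u ≠ w ∧
      c' u = c' x ∧ c' b = c' w

/-- A *star b-vertex*: every available color for `v` is blocked for its `P₄`-system. -/
def IsStarBVertex [Fintype V] [DecidableEq V] (G : SimpleGraph V) (c : V → ℕ) (v : V) : Prop :=
  ∀ j, ColorAvailableFor G c v j → BlockedForP4System G c v j

/-- The *star degree* `dˢ_G(v)` of a vertex: the maximum number of colors blocked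
for `v` over all star colorings of `G`. -/
noncomputable def starDegree [Fintype V] [DecidableEq V] (G : SimpleGraph V) (v : V) : ℕ :=
  sSup {n | ∃ c : V → ℕ, IsStarColoring G c ∧
    {j | j ∈ colorsUsed c ∧ ColorBlockedFor G c v j}.ncard = n}

/-- The `mₛ`-degree of a graph: the largest `k` such that `G` has `k` vertices
of star degree at least `k - 1` (equivalently, with the vertices ordered by
non-increasing star degree, `mₛ(G) = max {i : i - 1 ≤ dˢ_G(vᵢ)}`). -/
noncomputable def msDegree [Fintype V] [DecidableEq V] (G : SimpleGraph V) : ℕ :=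
  sSup {k | ∃ s : Finset V, s.card = k ∧ ∀ v ∈ s, k - 1 ≤ starDegree G v}

/-- The maximum degree `Δ(G)` of a graph. -/
noncomputable def maxDeg (G : SimpleGraph V) : ℕ :=
  sSup {d | ∃ v : V, (G.neighborSet v).ncard = d}

/-- The *b-chromatic number* `φ(G)`: the maximum number of colors of a proper coloring
in which every color class contains a vertex whose closed neighborhood contains
all the colors. -/
noncomputable def bChromaticNumber [Fintype V] (G : SimpleGraph V) : ℕ :=
  sSup {k | ∃ c : V → ℕ, (∀ ⦃u w⦄, G.Adj u w → c u ≠ c w) ∧ (colorsUsed c).card = k ∧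
    ∀ i ∈ colorsUsed c, ∃ v, c v = i ∧
      ∀ j ∈ colorsUsed c, ∃ u, (u = v ∨ G.Adj v u) ∧ c u = j}

/-- The join `G ∨ H` of two simple graphs: disjoint union of `G` and `H`
together with all edges between the two vertex sets. -/
def graphJoin {α β : Type*} (G : SimpleGraph α) (H : SimpleGraph β) :
    SimpleGraph (α ⊕ β) where
  Adj x y :=
    (∃ a b, x = Sum.inl a ∧ y = Sum.inl b ∧ G.Adj a b) ∨
    (∃ a b, x = Sum.inr a ∧ y = Sum.inr b ∧ H.Adj a b) ∨
    (∃ a b, x = Sum.inl a ∧ y = Sum.inr b) ∨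
    (∃ a b, x = Sum.inr a ∧ y = Sum.inl b)
  symm := by
    constructor
    rintro x y (⟨a,b,rfl,rfl,h⟩|⟨a,b,rfl,rfl,h⟩|⟨a,b,rfl,rfl⟩|⟨a,b,rfl,rfl⟩)
    · exact Or.inl ⟨b, a, rfl, rfl, h.symm⟩
    · exact Or.inr (Or.inl ⟨b, a, rfl, rfl, h.symm⟩)
    · exact Or.inr (Or.inr (Or.inr ⟨b, a, rfl, rfl⟩))
    · exact Or.inr (Or.inr (Or.inl ⟨b, a, rfl, rfl⟩))
  loopless := by
    constructor
    rintro x (⟨a,b,h1,h2,h⟩|⟨a,b,h1,h2,h⟩|⟨a,b,h1,h2⟩|⟨a,b,h1,h2⟩) <;> subst h1 <;>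
      simp_all [SimpleGraph.irrefl]

/-- `N₂(v)`: vertices at distance exactly two from `v`. -/
def distTwoSet (G : SimpleGraph V) (v : V) : Set V := {u | G.dist v u = 2}

/-- `N₃(v)`: vertices at distance exactly three from `v`. -/
def distThreeSet (G : SimpleGraph V) (v : V) : Set V := {u | G.dist v u = 3}

/-- `X(v)`: vertices at distance two from `v` with no neighbor at distance three from `v`. -/
def XSet (G : SimpleGraph V) (v : V) : Set V :=
  {u | u ∈ distTwoSet G v ∧ ∀ w ∈ distThreeSet G v, ¬ G.Adj u w}

/-- `Y(v)`: vertices at distance two from `v` having a neighbor at distance three from `v`. -/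
def YSet (G : SimpleGraph V) (v : V) : Set V := distTwoSet G v \ XSet G v

/-! ### Auxiliary lemmas for the proof -/

section Aux

set_option linter.unusedSectionVars false

variable [Fintype V] [DecidableEq V]

lemma mem_colorsUsed_iff {c : V → ℕ} {j : ℕ} : j ∈ colorsUsed c ↔ ∃ v, c v = j := by
  simp [colorsUsed, eq_comm]

lemma mem_colorsUsed_self (c : V → ℕ) (v : V) : c v ∈ colorsUsed c :=
  mem_colorsUsed_iff.mpr ⟨v, rfl⟩

lemma avail_spec {G : SimpleGraph V} {c : V → ℕ} {v : V} {j : ℕ}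
    (h : ColorAvailableFor G c v j) :
    j ∈ colorsUsed c ∧ j ≠ c v ∧ IsStarColoring G (Function.update c v j) := by
  obtain ⟨h1, h2⟩ := h
  rw [ColorBlockedFor] at h2
  push_neg at h2
  exact ⟨h1, h2.1, h2.2⟩

lemma p4rel_symm {G : SimpleGraph V} {c : V → ℕ} : Symmetric (P4Rel G c) := by
  rintro u w ⟨hcol, b, x, h1, h2, h3, n1, n2, n3, d1, d2, d3⟩
  exact ⟨hcol.symm, x, b, h3.symm, h2.symm, h1.symm,
    fun h => n2 h.symm, fun h => n1 h.symm, fun h => n3 h.symm,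
    d2.symm, d1.symm, d3.symm⟩

lemma p4rel_color {G : SimpleGraph V} {c : V → ℕ} {u w : V}
    (h : Relation.ReflTransGen (P4Rel G c) u w) : c u = c w := by
  induction h with
  | refl => rfl
  | tail _ hst ih => exact ih.trans hst.1

/-- If `c'` is a star coloring obtained from the star coloring `c` by recoloring the whole
color class `i` (each vertex receiving a used color different from `i`), then the new color
of each vertex of the class is in fact available for that vertex. -/
lemma step_avail {G : SimpleGraph V} {c c' : V → ℕ} (hc : IsStarColoring G c)
    (hc' : IsStarColoring G c') {i : ℕ}
    (hfix : ∀ v, c v ≠ i → c' v = c v)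
    (hrec : ∀ v, c v = i → c' v ≠ i ∧ c' v ∈ colorsUsed c)
    {u : V} (hu : c u = i) : ColorAvailableFor G c u (c' u) := by
  obtain ⟨hne, hmem⟩ := hrec u hu
  refine ⟨hmem, ?_⟩
  rintro (heq | hnstar)
  · exact hne (heq.trans hu)
  · apply hnstar
    constructor
    · intro p q hpq
      by_cases hp : p = u
      · by_cases hq : q = u
        · rw [hp, hq] at hpq
          exact absurd hpq (G.irrefl)
        · rw [hp, Function.update_self, Function.update_of_ne hq]
          have hpq' : G.Adj u q := hp ▸ hpq
          have hqi : c q ≠ i := fun hqq => hc.1 hpq' (hu.trans hqq.symm)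
          have hp' := hc'.1 hpq'
          rwa [hfix q hqi] at hp'
      · by_cases hq : q = u
        · rw [hq, Function.update_of_ne hp, Function.update_self]
          have hpq' : G.Adj p u := hq ▸ hpq
          have hpi : c p ≠ i := fun hpp => hc.1 hpq' (hpp.trans hu.symm)
          have hp' := hc'.1 hpq'
          rwa [hfix p hpi] at hp'
        · rw [Function.update_of_ne hp, Function.update_of_ne hq]
          exact hc.1 hpq
    · rintro a b x y h1 h2 h3 n1 n2 n3 ⟨e1, e2⟩
      by_cases hau : a = u
      · subst hau
        rw [Function.update_self, Function.update_of_ne n1.symm] at e1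
        rw [Function.update_of_ne h1.ne', Function.update_of_ne n3.symm] at e2
        -- e1 : c' a = c x, e2 : c b = c y
        have hbi : c b ≠ i := fun hh => hc.1 h1 (hu.trans hh.symm)
        have hxi : c x ≠ i := by rw [← e1]; exact hne
        have hyi : c y ≠ i := by rw [← e2]; exact hbi
        exact hc'.2 a b x y h1 h2 h3 n1 n2 n3
          ⟨by rw [hfix x hxi]; exact e1, by rw [hfix b hbi, hfix y hyi]; exact e2⟩
      · by_cases hbu : b = u
        · subst hbu
          rw [Function.update_of_ne h1.ne, Function.update_of_ne h2.ne'] at e1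
          rw [Function.update_self, Function.update_of_ne n2.symm] at e2
          -- e1 : c a = c x, e2 : c' b = c y
          have hai : c a ≠ i := fun hh => hc.1 h1 (hh.trans hu.symm)
          have hxi : c x ≠ i := fun hh => hc.1 h2 (hu.trans hh.symm)
          have hyi : c y ≠ i := by rw [← e2]; exact hne
          exact hc'.2 a b x y h1 h2 h3 n1 n2 n3
            ⟨by rw [hfix a hai, hfix x hxi]; exact e1, by rw [hfix y hyi]; exact e2⟩
        · by_cases hxu : x = u
          · subst hxu
            rw [Function.update_of_ne n1, Function.update_self] at e1
            rw [Function.update_of_ne h2.ne, Function.update_of_ne h3.ne'] at e2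
            -- e1 : c a = c' x, e2 : c b = c y
            have hbi : c b ≠ i := fun hh => hc.1 h2 (hh.trans hu.symm)
            have hyi : c y ≠ i := fun hh => hc.1 h3 (hu.trans hh.symm)
            have hai : c a ≠ i := by rw [e1]; exact hne
            exact hc'.2 a b x y h1 h2 h3 n1 n2 n3
              ⟨by rw [hfix a hai]; exact e1, by rw [hfix b hbi, hfix y hyi]; exact e2⟩
          · by_cases hyu : y = u
            · subst hyu
              rw [Function.update_of_ne n3, Function.update_of_ne h3.ne] at e1
              rw [Function.update_of_ne n2, Function.update_self] at e2
              -- e1 : c a = c x, e2 : c b = c' y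
              have hbi : c b ≠ i := by rw [e2]; exact hne
              have hxi : c x ≠ i := fun hh => hc.1 h3 (hh.trans hu.symm)
              have hai : c a ≠ i := by rw [e1]; exact hxi
              exact hc'.2 a b x y h1 h2 h3 n1 n2 n3
                ⟨by rw [hfix a hai, hfix x hxi]; exact e1, by rw [hfix b hbi]; exact e2⟩
            · rw [Function.update_of_ne hau, Function.update_of_ne hxu] at e1
              rw [Function.update_of_ne hbu, Function.update_of_ne hyu] at e2
              exact hc.2 a b x y h1 h2 h3 n1 n2 n3 ⟨e1, e2⟩

/-- If every color class of a star coloring contains a star b-vertex, then no star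
recoloring step is possible. -/
lemma no_step_of_bvertex (G : SimpleGraph V) (c : V → ℕ) (hc : IsStarColoring G c)
    (h : ∀ i ∈ colorsUsed c, ∃ v, c v = i ∧ IsStarBVertex G c v) :
    ∀ c', ¬ StarRecolorStep G c' c := by
  rintro c' ⟨-, hc', i, hi, hfix, hrec⟩
  obtain ⟨v, hv, hbv⟩ := h i hi
  have havail : ∀ u, c u = i → ColorAvailableFor G c u (c' u) :=
    fun u hu => step_avail hc hc' hfix hrec hu
  have hav := hbv (c' v) (havail v hv)
  obtain ⟨u, w, b, x, -, -, a1, a2, a3, d1, d2, d3, e1, e2⟩ :=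
    hav c' (fun u hu => hfix u (by rwa [hv] at hu)) (fun u hu => havail u (by rwa [hv] at hu)) rfl
  exact hc'.2 u b x w a1 a2 a3 d1 d2 d3 ⟨e1, e2⟩

/-- If some nonempty color class of a star coloring contains no star b-vertex, then a
star recoloring step is possible. -/
lemma exists_step_of_no_bvertex (G : SimpleGraph V) (c : V → ℕ) (hc : IsStarColoring G c)
    {i : ℕ} (hi : i ∈ colorsUsed c) (hnb : ∀ v, c v = i → ¬ IsStarBVertex G c v) :
    ∃ c', StarRecolorStep G c' c := by
  classical
  set r : V → V → Prop := Relation.ReflTransGen (P4Rel G c) with hrdef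
  have requiv : Equivalence r :=
    ⟨fun _ => Relation.ReflTransGen.refl,
     fun h => by haveI : Std.Symm (P4Rel G c) := ⟨fun a b h => p4rel_symm h⟩; exact (Relation.ReflTransGen.symmetric (r := P4Rel G c)).symm _ _ h,
     fun h h' => Relation.ReflTransGen.trans h h'⟩
  let s : Setoid V := ⟨r, requiv⟩
  let rep : V → V := fun v => (Quotient.mk s v).out
  have hrep : ∀ v, r (rep v) v := fun v => @Quotient.exact V s _ _ (Quotient.out_eq _)
  have hrepeq : ∀ {a y : V}, r a y → rep a = rep y := by
    intro a y h
    show (Quotient.mk s a).out = (Quotient.mk s y).out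
    rw [Quotient.sound (s := s) h]
  -- the per-P4-system colorings
  have hex : ∀ v, c v = i → ∃ cv : V → ℕ,
      (∀ u, c u ≠ i → cv u = c u) ∧ (∀ u, c u = i → ColorAvailableFor G c u (cv u)) ∧
      ¬∃ u w b x, u ∈ P4System G c v ∧ w ∈ P4System G c v ∧ G.Adj u b ∧ G.Adj b x ∧
        G.Adj x w ∧ u ≠ x ∧ b ≠ w ∧ u ≠ w ∧ cv u = cv x ∧ cv b = cv w := by
    intro v hv
    have h0 := hnb v hv
    rw [IsStarBVertex] at h0
    push_neg at h0
    obtain ⟨j, hj, hbl⟩ := h0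
    rw [BlockedForP4System] at hbl
    obtain ⟨cv, hcv⟩ := not_forall.mp hbl
    rw [Classical.not_imp, Classical.not_imp, Classical.not_imp] at hcv
    obtain ⟨H1, H2, _, H4⟩ := hcv
    exact ⟨cv, fun u hu => H1 u (by rwa [hv]), fun u hu => H2 u (by rwa [hv]), H4⟩
  let F : V → (V → ℕ) := fun v => if hv : c v = i then (hex v hv).choose else c
  have hF1 : ∀ v, c v = i → ∀ u, c u ≠ i → F v u = c u := by
    intro v hv u hu
    show (if hv : c v = i then (hex v hv).choose else c) u = c u
    rw [dif_pos hv]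
    exact (hex v hv).choose_spec.1 u hu
  have hF2 : ∀ v, c v = i → ∀ u, c u = i → ColorAvailableFor G c u (F v u) := by
    intro v hv u hu
    show ColorAvailableFor G c u ((if hv : c v = i then (hex v hv).choose else c) u)
    rw [dif_pos hv]
    exact (hex v hv).choose_spec.2.1 u hu
  have hF3 : ∀ v, c v = i →
      ¬∃ u w b x, u ∈ P4System G c v ∧ w ∈ P4System G c v ∧ G.Adj u b ∧ G.Adj b x ∧
        G.Adj x w ∧ u ≠ x ∧ b ≠ w ∧ u ≠ w ∧ F v u = F v x ∧ F v b = F v w := by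
    intro v hv
    have : F v = (hex v hv).choose := dif_pos hv
    rw [this]
    exact (hex v hv).choose_spec.2.2
  -- the combined coloring
  let c' : V → ℕ := fun u => if c u = i then F (rep u) u else c u
  have hrepcol : ∀ v, c v = i → c (rep v) = i := fun v hv => (p4rel_color (hrep v)).trans hv
  have hfix : ∀ u, c u ≠ i → c' u = c u := fun u hu => if_neg hu
  have hrec : ∀ u, c u = i → c' u = F (rep u) u := fun u hu => if_pos hu
  have havail : ∀ u, c u = i → ColorAvailableFor G c u (c' u) := by
    intro u hu
    rw [hrec u hu]
    exact hF2 (rep u) (hrepcol u hu) u hu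
  -- properness of the combined coloring
  have hprop : ∀ ⦃p q : V⦄, G.Adj p q → c' p ≠ c' q := by
    intro p q hpq
    by_cases hp : c p = i <;> by_cases hq : c q = i
    · exact absurd (hp.trans hq.symm) (hc.1 hpq)
    · have hs := (avail_spec (havail p hp)).2.2
      have h2 := hs.1 hpq
      rw [Function.update_self, Function.update_of_ne hpq.ne'] at h2
      rw [hfix q hq]
      exact h2
    · have hs := (avail_spec (havail q hq)).2.2
      have h2 := hs.1 hpq
      rw [Function.update_self, Function.update_of_ne hpq.ne] at h2
      rw [hfix p hp]
      exact h2
    · rw [hfix p hp, hfix q hq]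
      exact hc.1 hpq
  -- star property of the combined coloring
  have hstar2 : ∀ a b x y : V, G.Adj a b → G.Adj b x → G.Adj x y →
      a ≠ x → b ≠ y → a ≠ y → ¬(c' a = c' x ∧ c' b = c' y) := by
    rintro a b x y h1 h2 h3 n1 n2 n3 ⟨e1, e2⟩
    have dval : ∀ u, c u = i → ∀ p, (p = u ∨ c p ≠ i) →
        Function.update c u (c' u) p = c' p := by
      intro u hu p hp
      rcases hp with rfl | hp
      · rw [Function.update_self]
      · rcases eq_or_ne p u with rfl | hne
        · rw [Function.update_self]
        · rw [Function.update_of_ne hne]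
          exact (hfix p hp).symm
    have single : ∀ u, c u = i → (a = u ∨ c a ≠ i) → (b = u ∨ c b ≠ i) →
        (x = u ∨ c x ≠ i) → (y = u ∨ c y ≠ i) → False := by
      intro u hu pa pb px py
      have hs := (avail_spec (havail u hu)).2.2
      exact hs.2 a b x y h1 h2 h3 n1 n2 n3
        ⟨by rw [dval u hu a pa, dval u hu x px]; exact e1,
         by rw [dval u hu b pb, dval u hu y py]; exact e2⟩
    by_cases hb : c b = i
    · have ha : c a ≠ i := fun h => hc.1 h1 (h.trans hb.symm)
      have hx : c x ≠ i := fun h => hc.1 h2 (hb.trans h.symm)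
      by_cases hy : c y = i
      · -- both b and y recolored : bicolored P4 already in c
        exact hc.2 a b x y h1 h2 h3 n1 n2 n3
          ⟨by rw [← hfix a ha, ← hfix x hx]; exact e1, hb.trans hy.symm⟩
      · exact single b hb (Or.inr ha) (Or.inl rfl) (Or.inr hx) (Or.inr hy)
    · by_cases ha : c a = i
      · by_cases hx : c x = i
        · -- both a and x recolored : bicolored P4 already in c
          have hy : c y ≠ i := fun h => hc.1 h3 (hx.trans h.symm)
          exact hc.2 a b x y h1 h2 h3 n1 n2 n3
            ⟨ha.trans hx.symm, by rw [← hfix b hb, ← hfix y hy]; exact e2⟩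
        · by_cases hy : c y = i
          · -- a and y recolored : they lie in a common P₄-system
            have nax : ¬ G.Adj a x := fun h => hprop h e1
            have nby : ¬ G.Adj b y := fun h => hprop h e2
            have nay : ¬ G.Adj a y := fun h => hc.1 h (ha.trans hy.symm)
            have hrel : P4Rel G c a y :=
              ⟨ha.trans hy.symm, b, x, h1, h2, h3, nax, nby, nay, n1, n2, n3⟩
            have hw : c (rep a) = i := hrepcol a ha
            have hmema : r (rep a) a := hrep a
            have hmemy : r (rep a) y :=
              Relation.ReflTransGen.trans hmema (Relation.ReflTransGen.single hrel)
            have hre : rep a = rep y := hrepeq (Relation.ReflTransGen.single hrel)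
            apply hF3 (rep a) hw
            refine ⟨a, y, b, x, hmema, hmemy, h1, h2, h3, n1, n2, n3, ?_, ?_⟩
            · rw [hF1 (rep a) hw x hx, ← hrec a ha, ← hfix x hx]
              exact e1
            · rw [hF1 (rep a) hw b hb, ← hfix b hb,
                show F (rep a) y = c' y from by rw [hrec y hy, hre]]
              exact e2
          · exact single a ha (Or.inl rfl) (Or.inr hb) (Or.inr hx) (Or.inr hy)
      · by_cases hx : c x = i
        · have hy : c y ≠ i := fun h => hc.1 h3 (hx.trans h.symm)
          exact single x hx (Or.inr ha) (Or.inr hb) (Or.inl rfl) (Or.inr hy)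
        · by_cases hy : c y = i
          · exact single y hy (Or.inr ha) (Or.inr hb) (Or.inr hx) (Or.inl rfl)
          · rw [hfix a ha, hfix x hx] at e1
            rw [hfix b hb, hfix y hy] at e2
            exact hc.2 a b x y h1 h2 h3 n1 n2 n3 ⟨e1, e2⟩
  refine ⟨c', hc, ⟨hprop, hstar2⟩, i, hi, hfix, fun v hv => ?_⟩
  have hs := avail_spec (havail v hv)
  exact ⟨fun h => hs.2.1 (h.trans hv.symm), hs.1⟩

/-- Characterization: a star coloring is a minimal element of `≺ₛ` iff every color class
contains a star b-vertex. -/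
lemma isStarBColoring_iff (G : SimpleGraph V) (c : V → ℕ) :
    IsStarBColoring G c ↔ IsStarColoring G c ∧
      ∀ i ∈ colorsUsed c, ∃ v, c v = i ∧ IsStarBVertex G c v := by
  constructor
  · rintro ⟨hc, hmin⟩
    refine ⟨hc, fun i hi => ?_⟩
    by_contra h
    push_neg at h
    obtain ⟨c', hc'⟩ := exists_step_of_no_bvertex G c hc hi h
    exact hmin c' hc'
  · rintro ⟨hc, h⟩
    exact ⟨hc, no_step_of_bvertex G c hc h⟩

lemma card_lt_of_step {G : SimpleGraph V} {c' c : V → ℕ} (h : StarRecolorStep G c' c) :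
    (colorsUsed c').card < (colorsUsed c).card := by
  obtain ⟨-, -, i, hi, hfix, hrec⟩ := h
  have hsub : colorsUsed c' ⊆ (colorsUsed c).erase i := by
    intro j hj
    obtain ⟨v, rfl⟩ := mem_colorsUsed_iff.mp hj
    by_cases hv : c v = i
    · obtain ⟨h1, h2⟩ := hrec v hv
      exact Finset.mem_erase.mpr ⟨h1, h2⟩
    · rw [hfix v hv]
      exact Finset.mem_erase.mpr ⟨hv, mem_colorsUsed_self c v⟩
  calc (colorsUsed c').card ≤ ((colorsUsed c).erase i).card := Finset.card_le_card hsub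
    _ < (colorsUsed c).card := Finset.card_erase_lt_of_mem hi

lemma exists_isStarBColoring (G : SimpleGraph V) : ∃ c : V → ℕ, IsStarBColoring G c := by
  classical
  have main : ∀ n (c : V → ℕ), IsStarColoring G c → (colorsUsed c).card ≤ n →
      ∃ c', IsStarBColoring G c' := by
    intro n
    induction n with
    | zero =>
      intro c hc hcard
      refine ⟨c, hc, fun c'' hstep => ?_⟩
      obtain ⟨-, -, i, hi, -, -⟩ := hstep
      rw [Finset.card_eq_zero.mp (Nat.le_zero.mp hcard)] at hi
      exact absurd hi (Finset.notMem_empty i)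
    | succ n ih =>
      intro c hc hcard
      by_cases hmin : ∀ c'', ¬ StarRecolorStep G c'' c
      · exact ⟨c, hc, hmin⟩
      · push_neg at hmin
        obtain ⟨c'', hstep⟩ := hmin
        exact ih c'' hstep.2.1 (by have := card_lt_of_step hstep; omega)
  let e := Fintype.equivFin V
  have cinj : Function.Injective (fun v => (e v : ℕ)) := by
    intro u w h
    exact e.injective (Fin.val_injective h)
  have hstar : IsStarColoring G (fun v => (e v : ℕ)) := by
    refine ⟨fun u w h hc => h.ne (cinj hc), ?_⟩
    rintro a b x y - - - n1 - - ⟨e1, -⟩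
    exact n1 (cinj e1)
  refine main (Fintype.card V) (fun v => (e v : ℕ)) hstar ?_
  calc (colorsUsed fun v => (e v : ℕ)).card ≤ Finset.univ.card := Finset.card_image_le
    _ = Fintype.card V := Finset.card_univ

end Aux

/-- **Corollary.** The star b-chromatic number `Sᵦ(G)` is the largest integer `k` such
that `G` admits a star coloring with `k` colors in which every color class contains a
star b-vertex. -/
theorem starBChromaticNumber_isGreatest [Fintype V] [DecidableEq V] (G : SimpleGraph V) :
    IsGreatest {k : ℕ | ∃ c : V → ℕ, IsStarColoring G c ∧ (colorsUsed c).card = k ∧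
        ∀ i ∈ colorsUsed c, ∃ v, c v = i ∧ IsStarBVertex G c v}
      (starBChromaticNumber G) := by
  classical
  have hset : {k : ℕ | ∃ c : V → ℕ, IsStarColoring G c ∧ (colorsUsed c).card = k ∧
        ∀ i ∈ colorsUsed c, ∃ v, c v = i ∧ IsStarBVertex G c v}
      = {n : ℕ | ∃ c : V → ℕ, IsStarBColoring G c ∧ (colorsUsed c).card = n} := by
    ext n
    constructor
    · rintro ⟨c, h1, h2, h3⟩
      exact ⟨c, (isStarBColoring_iff G c).mpr ⟨h1, h3⟩, h2⟩
    · rintro ⟨c, h1, h2⟩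
      obtain ⟨ha, hb⟩ := (isStarBColoring_iff G c).mp h1
      exact ⟨c, ha, h2, hb⟩
  rw [starBChromaticNumber, ← hset]
  have hbdd : BddAbove {k : ℕ | ∃ c : V → ℕ, IsStarColoring G c ∧ (colorsUsed c).card = k ∧
      ∀ i ∈ colorsUsed c, ∃ v, c v = i ∧ IsStarBVertex G c v} := by
    refine ⟨Fintype.card V, ?_⟩
    rintro n ⟨c, -, h2, -⟩
    rw [← h2]
    calc (colorsUsed c).card ≤ Finset.univ.card := Finset.card_image_le
      _ = Fintype.card V := Finset.card_univ
  have hne : Set.Nonempty {k : ℕ | ∃ c : V → ℕ, IsStarColoring G c ∧ (colorsUsed c).card = k ∧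
      ∀ i ∈ colorsUsed c, ∃ v, c v = i ∧ IsStarBVertex G c v} := by
    obtain ⟨c, hc⟩ := exists_isStarBColoring G
    obtain ⟨ha, hb⟩ := (isStarBColoring_iff G c).mp hc
    exact ⟨(colorsUsed c).card, c, ha, rfl, hb⟩
  exact ⟨Nat.sSup_mem hne hbdd, fun n hn => le_csSup hbdd hn⟩
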